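/- Let N ≥ 2, λ ≥ 1. Then the double average over r, s ranging over integers comparable to √λ satisfies: for all x, y ∈ ℝ, ( E_{r ≍ √λ} ⟨2rx − √λ y⟩^{−N} )² ≤ C · ( E_{|r| ≲ √λ} ⟨2rx⟩^{−N} ) · ( E_{s ≍ √λ} ⟨2sx − √λ y⟩^{−N} ), where E denotes the average (expectation) over the stated finite integer range and ⟨z⟩ = (1+z²)^{1/2}, and C is absolute. -/

import Mathlib

open Finset

private lemma aux_key (N : ℕ) (u v : ℝ) (h : v^2 ≤ u^2) :
    (1+u^2)^(-(N:ℝ)/2) * (1+v^2)^(-(N:ℝ)/2) ≤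
    2^N * ((1+(u-v)^2)^(-(N:ℝ)/2) * ((1+u^2)^(-(N:ℝ)/2) + (1+v^2)^(-(N:ℝ)/2))) := by
  have hu : (0:ℝ) < 1 + u^2 := by positivity
  have hv : (0:ℝ) < 1 + v^2 := by positivity
  have hd : (0:ℝ) < 1 + (u-v)^2 := by positivity
  have hple : -(N:ℝ)/2 ≤ 0 := by
    have : (0:ℝ) ≤ (N:ℝ) := N.cast_nonneg
    linarith
  have h1 : 1 + (u-v)^2 ≤ 4*(1+u^2) := by nlinarith
  have h2 : (4*(1+u^2)) ^ (-(N:ℝ)/2) ≤ (1+(u-v)^2) ^ (-(N:ℝ)/2) :=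
    Real.rpow_le_rpow_of_nonpos hd h1 hple
  have h3 : (4*(1+u^2)) ^ (-(N:ℝ)/2) = (4:ℝ)^(-(N:ℝ)/2) * (1+u^2)^(-(N:ℝ)/2) :=
    Real.mul_rpow (by norm_num) hu.le
  have h4 : (4:ℝ)^(-(N:ℝ)/2) = ((2:ℝ)^N)⁻¹ := by
    rw [show (4:ℝ) = (2:ℝ)^((2:ℕ):ℝ) by norm_num [Real.rpow_natCast],
      ← Real.rpow_natCast (2:ℝ) N, ← Real.rpow_mul (by norm_num), ← Real.rpow_neg (by norm_num)]
    ring_nf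
  have hA : (0:ℝ) < (1+u^2)^(-(N:ℝ)/2) := Real.rpow_pos_of_pos hu _
  have hB : (0:ℝ) < (1+v^2)^(-(N:ℝ)/2) := Real.rpow_pos_of_pos hv _
  have hD : ((2:ℝ)^N)⁻¹ * (1+u^2)^(-(N:ℝ)/2) ≤ (1+(u-v)^2)^(-(N:ℝ)/2) := by
    rw [← h4, ← h3]; exact h2
  have h2N : (0:ℝ) < 2^N := by positivity
  have h5 : (2:ℝ)^N * (((2:ℝ)^N)⁻¹ * (1+u^2)^(-(N:ℝ)/2)) = (1+u^2)^(-(N:ℝ)/2) := by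
    field_simp
  nlinarith [mul_le_mul_of_nonneg_left hD h2N.le,
    mul_le_mul_of_nonneg_right (mul_le_mul_of_nonneg_left hD h2N.le)
      (by linarith : (0:ℝ) ≤ (1+u^2)^(-(N:ℝ)/2) + (1+v^2)^(-(N:ℝ)/2))]

private lemma key_ineq (N : ℕ) (u v : ℝ) :
    (1+u^2)^(-(N:ℝ)/2) * (1+v^2)^(-(N:ℝ)/2) ≤
    2^N * ((1+(u-v)^2)^(-(N:ℝ)/2) * ((1+u^2)^(-(N:ℝ)/2) + (1+v^2)^(-(N:ℝ)/2))) := by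
  rcases le_total (v^2) (u^2) with h|h
  · exact aux_key N u v h
  · have h' := aux_key N v u h
    have e : (v-u)^2 = (u-v)^2 := by ring
    rw [e] at h'
    linarith [h']

private lemma coef_lemma (P cI cJ : ℝ) (hP : 0 < P) (hI : 0 < cI) (hJ : 0 < cJ)
    (h : cJ ≤ 8 * cI) : cI⁻¹ * cI⁻¹ * P ≤ (P*8) * cJ⁻¹ * cI⁻¹ := by
  rw [show cI⁻¹ * cI⁻¹ * P = P / (cI * cI) by field_simp,
      show (P*8) * cJ⁻¹ * cI⁻¹ = (P*8) / (cJ * cI) by field_simp,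
      div_le_div_iff₀ (by positivity) (by positivity)]
  nlinarith [mul_le_mul_of_nonneg_left h (mul_pos hP hI).le]

/-- Cauchy–Schwarz/re-indexing bound for the double average of Japanese-bracket
weights: `(E_{r ≍ √λ} ⟨2rx - √λ y⟩^{-N})² ≲ (E_{|r| ≲ √λ} ⟨2rx⟩^{-N}) ·
(E_{s ≍ √λ} ⟨2sx - √λ y⟩^{-N})`. -/
theorem stmt_14 (N : ℕ) (hN : 2 ≤ N) :
    ∃ C : ℝ, 0 < C ∧ ∀ lam : ℝ, 1 ≤ lam → ∀ x y : ℝ,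
      (((Finset.Icc ⌈Real.sqrt lam / 3⌉ ⌊3 * Real.sqrt lam⌋).card : ℝ)⁻¹ *
          ∑ r ∈ Finset.Icc ⌈Real.sqrt lam / 3⌉ ⌊3 * Real.sqrt lam⌋,
            (1 + (2 * (r : ℝ) * x - Real.sqrt lam * y) ^ 2) ^ (-(N : ℝ) / 2)) ^ 2 ≤
        C * (((Finset.Icc (-⌊6 * Real.sqrt lam⌋) ⌊6 * Real.sqrt lam⌋).card : ℝ)⁻¹ *
            ∑ r ∈ Finset.Icc (-⌊6 * Real.sqrt lam⌋) ⌊6 * Real.sqrt lam⌋,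
              (1 + (2 * (r : ℝ) * x) ^ 2) ^ (-(N : ℝ) / 2)) *
          (((Finset.Icc ⌈Real.sqrt lam / 3⌉ ⌊3 * Real.sqrt lam⌋).card : ℝ)⁻¹ *
            ∑ s ∈ Finset.Icc ⌈Real.sqrt lam / 3⌉ ⌊3 * Real.sqrt lam⌋,
              (1 + (2 * (s : ℝ) * x - Real.sqrt lam * y) ^ 2) ^ (-(N : ℝ) / 2)) := by
  refine ⟨2^(N+1)*8, by positivity, ?_⟩
  intro lam hlam x y
  set t := Real.sqrt lam with htdef
  have ht : 1 ≤ t := Real.one_le_sqrt.mpr hlam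
  set a : ℤ := ⌈t/3⌉ with hadef
  set b : ℤ := ⌊3*t⌋ with hbdef
  set m : ℤ := ⌊6*t⌋ with hmdef
  have ha : 0 < a := Int.ceil_pos.mpr (by linarith)
  have haR : (a:ℝ) < t/3 + 1 := by
    have := Int.ceil_lt_add_one (t/3)
    exact_mod_cast this
  have hbR : 3*t - 1 < (b:ℝ) := by
    have := Int.sub_one_lt_floor (3*t)
    linarith
  have hmR : (m:ℝ) ≤ 6*t := Int.floor_le _
  have hbm : b ≤ m := Int.floor_le_floor (by linarith)
  have hab : a ≤ b := by
    have h1 : (a:ℝ) < (b:ℝ) + 1 := by linarith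
    have h2 : a < b + 1 := by exact_mod_cast h1
    omega
  have hm0 : 0 ≤ m := le_trans (le_trans ha.le hab) hbm
  set f : ℤ → ℝ := fun r => (1 + (2*(r:ℝ)*x - t*y)^2)^(-(N:ℝ)/2) with hf
  set g : ℤ → ℝ := fun k => (1 + (2*(k:ℝ)*x)^2)^(-(N:ℝ)/2) with hg
  have hfpos : ∀ r : ℤ, 0 ≤ f r := fun r => by simp only [hf]; positivity
  have hgpos : ∀ k : ℤ, 0 ≤ g k := fun k => by simp only [hg]; positivity
  set Sf := ∑ r ∈ Icc a b, f r with hSfdef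
  set Sg := ∑ k ∈ Icc (-m) m, g k with hSgdef
  have hSf : 0 ≤ Sf := Finset.sum_nonneg fun r _ => hfpos r
  have hSg : 0 ≤ Sg := Finset.sum_nonneg fun k _ => hgpos k
  -- inner re-indexing bounds
  have hsum1 : ∀ c ∈ Icc a b, (∑ s ∈ Icc a b, g (c - s)) ≤ Sg := by
    intro c hc
    have hinj : ∀ x ∈ Icc a b, ∀ y ∈ Icc a b, c - x = c - y → x = y := by
      intro p _ q _ h; omega
    rw [← Finset.sum_image (f := g) hinj]
    apply Finset.sum_le_sum_of_subset_of_nonneg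
    · intro k hk
      simp only [Finset.mem_image, Finset.mem_Icc] at hk ⊢
      obtain ⟨s, hs, rfl⟩ := hk
      simp only [Finset.mem_Icc] at hc
      omega
    · intro k _ _; exact hgpos k
  have hsum2 : ∀ c ∈ Icc a b, (∑ r ∈ Icc a b, g (r - c)) ≤ Sg := by
    intro c hc
    have hinj : ∀ x ∈ Icc a b, ∀ y ∈ Icc a b, x - c = y - c → x = y := by
      intro p _ q _ h; omega
    rw [← Finset.sum_image (f := g) hinj]
    apply Finset.sum_le_sum_of_subset_of_nonneg
    · intro k hk
      simp only [Finset.mem_image, Finset.mem_Icc] at hk ⊢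
      obtain ⟨s, hs, rfl⟩ := hk
      simp only [Finset.mem_Icc] at hc
      omega
    · intro k _ _; exact hgpos k
  -- pointwise bracket-splitting inequality
  have hpt : ∀ r s : ℤ, f r * f s ≤ 2^N * (g (r-s) * (f r + f s)) := by
    intro r s
    have e : (2*(r:ℝ)*x - t*y) - (2*(s:ℝ)*x - t*y) = 2*((r-s : ℤ):ℝ)*x := by
      push_cast; ring
    have h := key_ineq N (2*(r:ℝ)*x - t*y) (2*(s:ℝ)*x - t*y)
    rw [e] at h
    simp only [hf, hg]
    exact h
  -- the main double-sum bound
  have hdouble : Sf * Sf ≤ 2^(N+1) * (Sg * Sf) := by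
    have step1 : Sf * Sf = ∑ r ∈ Icc a b, ∑ s ∈ Icc a b, f r * f s :=
      Finset.sum_mul_sum _ _ _ _
    have step2 : ∑ r ∈ Icc a b, ∑ s ∈ Icc a b, f r * f s ≤
        2^N * ∑ r ∈ Icc a b, ∑ s ∈ Icc a b, g (r-s) * (f r + f s) := by
      rw [Finset.mul_sum]
      apply Finset.sum_le_sum; intro r _
      rw [Finset.mul_sum]
      apply Finset.sum_le_sum; intro s _
      exact hpt r s
    have split : ∑ r ∈ Icc a b, ∑ s ∈ Icc a b, g (r-s) * (f r + f s)
        = (∑ r ∈ Icc a b, ∑ s ∈ Icc a b, g (r-s) * f r)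
          + (∑ r ∈ Icc a b, ∑ s ∈ Icc a b, g (r-s) * f s) := by
      rw [← Finset.sum_add_distrib]
      apply Finset.sum_congr rfl; intro r _
      rw [← Finset.sum_add_distrib]
      apply Finset.sum_congr rfl; intro s _; ring
    have bound1 : ∑ r ∈ Icc a b, ∑ s ∈ Icc a b, g (r-s) * f r ≤ Sg * Sf := by
      calc ∑ r ∈ Icc a b, ∑ s ∈ Icc a b, g (r-s) * f r
          ≤ ∑ r ∈ Icc a b, Sg * f r := by
            apply Finset.sum_le_sum; intro r hr
            rw [← Finset.sum_mul]
            exact mul_le_mul_of_nonneg_right (hsum1 r hr) (hfpos r)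
        _ = Sg * Sf := by rw [hSfdef, Finset.mul_sum]
    have bound2 : ∑ r ∈ Icc a b, ∑ s ∈ Icc a b, g (r-s) * f s ≤ Sg * Sf := by
      rw [Finset.sum_comm]
      calc ∑ s ∈ Icc a b, ∑ r ∈ Icc a b, g (r-s) * f s
          ≤ ∑ s ∈ Icc a b, Sg * f s := by
            apply Finset.sum_le_sum; intro s hs
            rw [← Finset.sum_mul]
            exact mul_le_mul_of_nonneg_right (hsum2 s hs) (hfpos s)
        _ = Sg * Sf := by rw [hSfdef, Finset.mul_sum]
    have h2N : (0:ℝ) ≤ 2^N := by positivity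
    calc Sf * Sf = ∑ r ∈ Icc a b, ∑ s ∈ Icc a b, f r * f s := step1
      _ ≤ 2^N * ∑ r ∈ Icc a b, ∑ s ∈ Icc a b, g (r-s) * (f r + f s) := step2
      _ ≤ 2^N * (Sg * Sf + Sg * Sf) := by
          rw [split]
          exact mul_le_mul_of_nonneg_left (add_le_add bound1 bound2) h2N
      _ = 2^(N+1) * (Sg * Sf) := by ring
  -- card computations
  have habR : (a:ℝ) ≤ (b:ℝ) := by exact_mod_cast hab
  have hm0R : (0:ℝ) ≤ (m:ℝ) := by exact_mod_cast hm0
  have hcI : (((Icc a b).card) : ℝ) = (b:ℝ) - (a:ℝ) + 1 := by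
    rw [Int.card_Icc, ← Int.cast_natCast (R := ℝ), Int.toNat_of_nonneg (by omega : (0:ℤ) ≤ b + 1 - a)]
    push_cast; ring
  have hcJ : (((Icc (-m) m).card) : ℝ) = 2*(m:ℝ) + 1 := by
    rw [Int.card_Icc, ← Int.cast_natCast (R := ℝ), Int.toNat_of_nonneg (by omega : (0:ℤ) ≤ m + 1 - (-m))]
    push_cast; ring
  have hIpos : (0:ℝ) < ((Icc a b).card : ℝ) := by rw [hcI]; linarith
  have hJpos : (0:ℝ) < ((Icc (-m) m).card : ℝ) := by rw [hcJ]; linarith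
  have hcard : ((Icc (-m) m).card : ℝ) ≤ 8 * ((Icc a b).card : ℝ) := by
    rw [hcI, hcJ]; linarith
  have hcoef : (((Icc a b).card : ℝ))⁻¹ * (((Icc a b).card : ℝ))⁻¹ * 2^(N+1)
      ≤ (2^(N+1)*8) * (((Icc (-m) m).card : ℝ))⁻¹ * (((Icc a b).card : ℝ))⁻¹ :=
    coef_lemma _ _ _ (by positivity) hIpos hJpos hcard
  calc ((((Icc a b).card : ℝ))⁻¹ * Sf)^2
      = (((Icc a b).card : ℝ))⁻¹ * (((Icc a b).card : ℝ))⁻¹ * (Sf * Sf) := by ring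
    _ ≤ (((Icc a b).card : ℝ))⁻¹ * (((Icc a b).card : ℝ))⁻¹ * (2^(N+1) * (Sg * Sf)) := by
        apply mul_le_mul_of_nonneg_left hdouble (by positivity)
    _ = ((((Icc a b).card : ℝ))⁻¹ * (((Icc a b).card : ℝ))⁻¹ * 2^(N+1)) * (Sg * Sf) := by ring
    _ ≤ ((2^(N+1)*8) * (((Icc (-m) m).card : ℝ))⁻¹ * (((Icc a b).card : ℝ))⁻¹) * (Sg * Sf) :=
        mul_le_mul_of_nonneg_right hcoef (mul_nonneg hSg hSf)
    _ = 2^(N+1)*8 * ((((Icc (-m) m).card : ℝ))⁻¹ * Sg) * ((((Icc a b).card : ℝ))⁻¹ * Sf) := by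
        ring
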